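/- For every c > 0 there exists a constant K > 0, depending only on c and the dimension d, with the following property: for all p, q ∈ ℝ^d and all 0 < r₁ < r₂ with |p − q|/(r₂ − r₁) ≤ c, there exists an orientation-preserving C¹ diffeomorphism φ of ℝ^d such that φ(p) = q, the support of φ is contained in the closure of the elongated neighbourhood E(p,q;r₂), and max([φ − id]_{Lip}, [φ⁻¹ − id]_{Lip}) < K. -/

import Mathlib

set_option linter.unusedSectionVars false

open Set Function

set_option maxHeartbeats 1000000

section Helpers

variable {E : Type*} [NormedAddCommGroup E] [NormedSpace ℝ E] [CompleteSpace E]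



theorem clm_det_one : ((1 : E →L[ℝ] E)).det = 1 := by
  simp [ContinuousLinearMap.det, ContinuousLinearMap.one_def]

theorem det_ne_zero_aux (A : E →L[ℝ] E) (h : ‖(1 : E →L[ℝ] E) - A‖ < 1) : A.det ≠ 0 := by
  have hA : IsUnit A := by
    have := (Units.oneSub ((1 : E →L[ℝ] E) - A) h).isUnit
    simpa using this
  obtain ⟨u, hu⟩ := hA
  have hmul : (u : E →L[ℝ] E) * ((u⁻¹ : (E →L[ℝ] E)ˣ) : E →L[ℝ] E) = 1 := u.mul_inv
  have hdet : ((u : E →L[ℝ] E)).det * (((u⁻¹ : (E →L[ℝ] E)ˣ) : E →L[ℝ] E)).det = 1 := by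
    rw [← LinearMap.det_comp]
    have h2 : ((u : E →L[ℝ] E) : E →ₗ[ℝ] E) ∘ₗ (((u⁻¹ : (E →L[ℝ] E)ˣ) : E →L[ℝ] E) : E →ₗ[ℝ] E)
        = ((((u : E →L[ℝ] E) * ((u⁻¹ : (E →L[ℝ] E)ˣ) : E →L[ℝ] E)) : E →L[ℝ] E) : E →ₗ[ℝ] E) := rfl
    rw [h2, hmul]
    exact clm_det_one
  rw [← hu]
  exact left_ne_zero_of_mul_eq_one hdet

theorem det_pos_aux (T : E →L[ℝ] E) (hT : ‖T‖ < 1) :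
    0 < ((1 : E →L[ℝ] E) + T).det := by
  set f : ℝ → ℝ := fun s => ((1 : E →L[ℝ] E) + s • T).det with hf
  have hcont : Continuous f :=
    ContinuousLinearMap.continuous_det.comp (continuous_const.add (continuous_id.smul continuous_const))
  have hne : ∀ s ∈ Icc (0:ℝ) 1, f s ≠ 0 := by
    intro s hs
    apply det_ne_zero_aux
    have : (1 : E →L[ℝ] E) - (1 + s • T) = -(s • T) := by abel
    rw [this, norm_neg]
    calc ‖s • T‖ ≤ ‖T‖ := by
          have h1 : ‖s • T‖ = ‖s‖ * ‖T‖ := norm_smul s T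
          rw [h1, Real.norm_eq_abs, abs_of_nonneg hs.1]
          nlinarith [hs.1, hs.2, norm_nonneg T]
      _ < 1 := hT
  have hf0 : f 0 = 1 := by
    have : f 0 = ((1 : E →L[ℝ] E)).det := by simp [hf]
    rw [this, clm_det_one]
  have hf1 : f 1 = ((1 : E →L[ℝ] E) + T).det := by simp [hf]
  by_contra hle
  push_neg at hle
  rw [← hf1] at hle
  have hlt : f 1 < 0 :=
    lt_of_le_of_ne hle (by simpa [hf1] using hne 1 (by norm_num))
  have h0 : (0:ℝ) ∈ Icc (f 1) (f 0) := ⟨hlt.le, by rw [hf0]; norm_num⟩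
  obtain ⟨s, hs, hfs⟩ := intermediate_value_Icc' (zero_le_one) hcont.continuousOn h0
  exact hne s hs hfs


theorem smoothTransition_lipschitz :
    ∃ M : ℝ, 1 ≤ M ∧ ∀ s t : ℝ,
      |Real.smoothTransition s - Real.smoothTransition t| ≤ M * |s - t| := by
  set f := Real.smoothTransition
  have hcd : ContDiff ℝ 1 f := Real.smoothTransition.contDiff
  have hdc : Continuous (deriv f) := hcd.continuous_deriv le_rfl
  obtain ⟨C, hC⟩ := isCompact_Icc.exists_bound_of_continuousOn (s := Icc (0:ℝ) 1)
    hdc.continuousOn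
  set M := max C 1 with hM
  refine ⟨M, le_max_right _ _, ?_⟩
  have hbound : ∀ t : ℝ, ‖deriv f t‖ ≤ M := by
    intro t
    rcases le_or_gt t 0 with ht | ht
    · rcases lt_or_eq_of_le ht with ht' | ht'
      · have hev : f =ᶠ[nhds t] (fun _ => 0) := by
          filter_upwards [Iio_mem_nhds ht'] with x hx
          exact Real.smoothTransition.zero_of_nonpos (le_of_lt hx)
        rw [hev.deriv_eq]
        simp [hM]
      · subst ht'
        exact le_trans (hC 0 (by norm_num)) (le_max_left _ _)
    · rcases le_or_gt t 1 with ht2 | ht2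
      · exact le_trans (hC t ⟨ht.le, ht2⟩) (le_max_left _ _)
      · have hev : f =ᶠ[nhds t] (fun _ => 1) := by
          filter_upwards [Ioi_mem_nhds ht2] with x hx
          exact Real.smoothTransition.one_of_one_le (le_of_lt hx)
        rw [hev.deriv_eq]
        simp [hM]
  intro s t
  have hdiff : ∀ x ∈ (univ : Set ℝ), DifferentiableAt ℝ f x :=
    fun x _ => hcd.differentiable one_ne_zero x
  have hbound' : ∀ x ∈ (univ : Set ℝ), ‖fderiv ℝ f x‖ ≤ M := by
    intro x _
    rw [← norm_deriv_eq_norm_fderiv]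
    exact hbound x
  have := convex_univ.norm_image_sub_le_of_norm_fderiv_le
    (fun x hx => hdiff x hx) hbound' (mem_univ t) (mem_univ s)
  simpa [Real.norm_eq_abs] using this

theorem min_sq_clamp_aux {b : ℝ} (hb : 0 ≤ b) {s t : ℝ} (hs : 0 ≤ s) (hst : s ≤ t) :
    min (t^2) (b^2) - min (s^2) (b^2) ≤ 2 * b * (t - s) := by
  rcases le_total b s with h1 | h1
  · have e1 : min (s^2) (b^2) = b^2 := min_eq_right (by nlinarith)
    have e2 : min (t^2) (b^2) = b^2 := min_eq_right (by nlinarith)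
    rw [e1, e2]
    nlinarith
  · have e1 : min (s^2) (b^2) = s^2 := min_eq_left (by nlinarith)
    rw [e1]
    rcases le_total t b with h2 | h2
    · have e2 : min (t^2) (b^2) = t^2 := min_eq_left (by nlinarith)
      rw [e2]; nlinarith
    · have e2 : min (t^2) (b^2) = b^2 := min_eq_right (by nlinarith)
      rw [e2]; nlinarith

theorem min_sq_clamp {s t b : ℝ} (hs : 0 ≤ s) (ht : 0 ≤ t) (hb : 0 ≤ b) :
    |min (s^2) (b^2) - min (t^2) (b^2)| ≤ 2 * b * |s - t| := by
  rcases le_total s t with h | h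
  · rw [abs_sub_comm (s^2 ⊓ b^2), abs_sub_comm s t,
      abs_of_nonneg (by nlinarith : (0:ℝ) ≤ t - s)]
    have hmono : min (s^2) (b^2) ≤ min (t^2) (b^2) :=
      min_le_min (by nlinarith) le_rfl
    rw [abs_of_nonneg (by linarith)]
    exact min_sq_clamp_aux hb hs h
  · rw [abs_of_nonneg (by nlinarith : (0:ℝ) ≤ s - t)]
    have hmono : min (t^2) (b^2) ≤ min (s^2) (b^2) :=
      min_le_min (by nlinarith) le_rfl
    rw [abs_of_nonneg (by linarith)]
    exact min_sq_clamp_aux hb ht h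

def Good (K : ℝ) (S : Set E) (φ ψ : E → E) : Prop :=
  0 ≤ K ∧ ContDiff ℝ 1 φ ∧ ContDiff ℝ 1 ψ ∧ Function.LeftInverse ψ φ ∧
  Function.RightInverse ψ φ ∧ (∀ x, 0 < (fderiv ℝ φ x).det) ∧
  (∀ x, x ∉ S → φ x = x) ∧
  (∀ x y, ‖(φ x - x) - (φ y - y)‖ ≤ K * dist x y) ∧
  (∀ x y, ‖(ψ x - x) - (ψ y - y)‖ ≤ K * dist x y)

theorem good_perturb {g : E → E} (hg : ContDiff ℝ 1 g)
    (hl : ∀ x y, ‖g x - g y‖ ≤ 2⁻¹ * ‖x - y‖) (S : Set E) (hS : ∀ x, x ∉ S → g x = 0) :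
    ∃ ψ, Good 1 S (fun x => x + g x) ψ := by
  have : Nonempty E := ⟨0⟩
  set φ : E → E := fun x => x + g x with hφdef
  have hφ : ContDiff ℝ 1 φ := contDiff_id.add hg
  have hgd : Differentiable ℝ g := hg.differentiable one_ne_zero
  -- fderiv bound
  have lipg : LipschitzWith 2⁻¹ g := by
    apply LipschitzWith.of_dist_le_mul
    intro x y
    rw [dist_eq_norm, dist_eq_norm]
    have := hl x y
    norm_num at this ⊢
    exact this
  have hDg : ∀ x, ‖fderiv ℝ g x‖ ≤ 2⁻¹ := by
    intro x
    have := norm_fderiv_le_of_lipschitz ℝ lipg (x₀ := x)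
    norm_num at this ⊢
    exact this
  have hfd : ∀ x, HasFDerivAt φ (1 + fderiv ℝ g x) x := by
    intro x
    exact (hasFDerivAt_id x).add (hgd x).hasFDerivAt
  have hfe : ∀ x, fderiv ℝ φ x = 1 + fderiv ℝ g x := fun x => (hfd x).fderiv
  have hdetpos : ∀ x, 0 < (fderiv ℝ φ x).det := by
    intro x
    rw [hfe x]
    exact det_pos_aux _ (lt_of_le_of_lt (hDg x) (by norm_num))
  -- bijectivity
  have hinj : Injective φ := by
    intro x y hxy
    have h1 : x - y = g y - g x := by
      rw [sub_eq_sub_iff_add_eq_add, hφdef] at *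
      simpa [add_comm] using hxy
    have h2 : ‖x - y‖ ≤ 2⁻¹ * ‖x - y‖ := by
      calc ‖x - y‖ = ‖g y - g x‖ := by rw [h1]
        _ ≤ 2⁻¹ * ‖y - x‖ := hl y x
        _ = 2⁻¹ * ‖x - y‖ := by rw [norm_sub_rev]
    have h3 : ‖x - y‖ ≤ 0 := by linarith
    have := le_antisymm h3 (norm_nonneg _)
    rwa [norm_eq_zero, sub_eq_zero] at this
  have hsurj : Surjective φ := by
    intro y
    have hc : ContractingWith 2⁻¹ (fun x => y - g x) := by
      constructor
      · rw [← NNReal.coe_lt_coe]; norm_num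
      · apply LipschitzWith.of_dist_le_mul
        intro a b
        rw [dist_sub_left, dist_eq_norm, dist_eq_norm]
        have := hl a b
        norm_num at this ⊢
        exact this
    refine ⟨hc.fixedPoint (fun x => y - g x), ?_⟩
    have h := hc.fixedPoint_isFixedPt
    rw [IsFixedPt] at h
    rw [sub_eq_iff_eq_add] at h
    show hc.fixedPoint (fun x => y - g x) + g (hc.fixedPoint (fun x => y - g x)) = y
    exact h.symm
  set Φ : E ≃ E := Equiv.ofBijective φ ⟨hinj, hsurj⟩ with hΦ
  set ψ : E → E := ⇑Φ.symm with hψdef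
  have hleft : Function.LeftInverse ψ φ := fun x => Φ.symm_apply_apply x
  have hright : Function.RightInverse ψ φ := fun y => Φ.apply_symm_apply y
  have hψlip : ∀ a b, ‖ψ a - ψ b‖ ≤ 2 * ‖a - b‖ := by
    intro a b
    set xa := ψ a with hxa
    set xb := ψ b with hxb
    have ha : xa + g xa = a := hright a
    have hb : xb + g xb = b := hright b
    have h1 : xa - xb = (a - b) - (g xa - g xb) := by
      rw [← ha, ← hb]; abel
    have h2 := hl xa xb
    have h3 : ‖xa - xb‖ ≤ ‖a - b‖ + ‖g xa - g xb‖ := by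
      rw [h1]; exact norm_sub_le _ _
    linarith
  have hψcont : Continuous ψ := by
    apply (LipschitzWith.of_dist_le_mul (K := 2) (f := ψ) ?_).continuous
    intro a b
    rw [dist_eq_norm, dist_eq_norm]
    simpa using hψlip a b
  -- units and equivalences
  have hu : ∀ x, ‖-(fderiv ℝ g x)‖ < 1 := fun x => by
    rw [norm_neg]; exact lt_of_le_of_lt (hDg x) (by norm_num)
  set u : E → (E →L[ℝ] E)ˣ := fun x => Units.oneSub _ (hu x) with hu'
  have huval : ∀ x, ((u x : (E →L[ℝ] E)ˣ) : E →L[ℝ] E) = fderiv ℝ φ x := by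
    intro x
    rw [hfe x]
    show 1 - -(fderiv ℝ g x) = _
    rw [sub_neg_eq_add]
  set e : E → (E ≃L[ℝ] E) := fun x => ContinuousLinearEquiv.unitsEquiv ℝ E (u x) with he'
  have hecoe : ∀ x, ((e x : E ≃L[ℝ] E) : E →L[ℝ] E) = fderiv ℝ φ x := by
    intro x
    rw [← huval x]
    rfl
  have hψstrict : ∀ b, HasStrictFDerivAt ψ (((e (ψ b)).symm : E ≃L[ℝ] E) : E →L[ℝ] E) b := by
    intro b
    have hbx : φ (ψ b) = b := hright b
    have hs : HasStrictFDerivAt φ ((e (ψ b) : E ≃L[ℝ] E) : E →L[ℝ] E) (ψ b) := by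
      rw [hecoe]
      exact hφ.hasStrictFDerivAt one_ne_zero
    have hev := hs.eventually_right_inverse
    have heq : ψ =ᶠ[nhds (φ (ψ b))] hs.localInverse φ (e (ψ b)) (ψ b) := by
      filter_upwards [hev] with y hy
      exact hinj (by rw [hright y, hy])
    have h2 := (hs.to_localInverse).congr_of_eventuallyEq heq.symm
    rwa [hbx] at h2
  -- units with explicit inverse = (e x).symm
  have hmulinv : ∀ x, (fderiv ℝ φ x) * (((e x).symm : E ≃L[ℝ] E) : E →L[ℝ] E) = 1 := by
    intro x
    rw [← hecoe x]
    exact (e x).coe_comp_coe_symm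
  have hinvmul : ∀ x, (((e x).symm : E ≃L[ℝ] E) : E →L[ℝ] E) * (fderiv ℝ φ x) = 1 := by
    intro x
    rw [← hecoe x]
    exact (e x).coe_symm_comp_coe
  set u' : E → (E →L[ℝ] E)ˣ := fun x =>
    ⟨fderiv ℝ φ x, (((e x).symm : E ≃L[ℝ] E) : E →L[ℝ] E), hmulinv x, hinvmul x⟩ with hu''
  have hring : ∀ x, Ring.inverse (fderiv ℝ φ x) = (((e x).symm : E ≃L[ℝ] E) : E →L[ℝ] E) := by
    intro x
    have := Ring.inverse_unit (u' x)
    exact this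
  have hψdiff : Differentiable ℝ ψ := fun b => (hψstrict b).differentiableAt
  have hψfderiv : ∀ b, fderiv ℝ ψ b = Ring.inverse (fderiv ℝ φ (ψ b)) := by
    intro b
    rw [(hψstrict b).hasFDerivAt.fderiv, hring]
  have hφfc : Continuous (fderiv ℝ φ) := hφ.continuous_fderiv one_ne_zero
  have hfψcont : Continuous (fderiv ℝ ψ) := by
    have hfun : fderiv ℝ ψ = fun b => Ring.inverse (fderiv ℝ φ (ψ b)) := funext hψfderiv
    rw [hfun, continuous_iff_continuousAt]
    intro b
    have hca : ContinuousAt (Ring.inverse : (E →L[ℝ] E) → (E →L[ℝ] E)) (fderiv ℝ φ (ψ b)) :=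
      NormedRing.inverse_continuousAt (u' (ψ b))
    have c1 : ContinuousAt ψ b := hψcont.continuousAt
    have c2 : ContinuousAt (fderiv ℝ φ) (ψ b) := hφfc.continuousAt
    have c4 := hca.comp c2
    have c5 := c4.comp c1
    exact c5
  have hψc1 : ContDiff ℝ 1 ψ := contDiff_one_iff_fderiv.mpr ⟨hψdiff, hfψcont⟩
  refine ⟨ψ, zero_le_one, hφ, hψc1, hleft, hright, hdetpos, ?_, ?_, ?_⟩
  · intro x hx
    show x + g x = x
    rw [hS x hx, add_zero]
  · intro x y
    have h1 : (φ x - x) - (φ y - y) = g x - g y := by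
      show ((x + g x) - x) - ((y + g y) - y) = g x - g y
      abel
    rw [h1, dist_eq_norm]
    have := hl x y
    have hn : (0:ℝ) ≤ ‖x - y‖ := norm_nonneg _
    linarith
  · intro a b
    have hl2 := hψlip b a
    set za := ψ a with hza
    set zb := ψ b with hzb
    have ha : za + g za = a := hright a
    have hb : zb + g zb = b := hright b
    have h1 : (za - a) - (zb - b) = g zb - g za := by
      rw [← ha, ← hb]; abel
    rw [h1, dist_eq_norm]
    have h2 := hl zb za
    have h4 : ‖b - a‖ = ‖a - b‖ := norm_sub_rev _ _
    linarith

theorem good_id (S : Set E) : Good 0 S (id : E → E) (id : E → E) := by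
  refine ⟨le_refl 0, contDiff_id, contDiff_id, fun x => rfl, fun x => rfl, ?_, fun x _ => rfl,
    ?_, ?_⟩
  · intro x
    rw [fderiv_id]
    have : (ContinuousLinearMap.id ℝ E) = (1 : E →L[ℝ] E) := rfl
    rw [this, clm_det_one]
    norm_num
  · intro x y; simp
  · intro x y; simp

theorem good_comp {K₁ K₂ : ℝ} {S : Set E} {φ₁ ψ₁ φ₂ ψ₂ : E → E}
    (h1 : Good K₁ S φ₁ ψ₁) (h2 : Good K₂ S φ₂ ψ₂) :
    Good (K₁ + K₂ + K₂ * K₁) S (φ₂ ∘ φ₁) (ψ₁ ∘ ψ₂) := by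
  obtain ⟨hK₁, hc1, hc1', hli1, hri1, hd1, hs1, hl1, hl1'⟩ := h1
  obtain ⟨hK₂, hc2, hc2', hli2, hri2, hd2, hs2, hl2, hl2'⟩ := h2
  have hφ1lip : ∀ x y : E, dist (φ₁ x) (φ₁ y) ≤ (1 + K₁) * dist x y := by
    intro x y
    have := hl1 x y
    rw [dist_eq_norm, dist_eq_norm] at *
    have h3 : φ₁ x - φ₁ y = ((φ₁ x - x) - (φ₁ y - y)) + (x - y) := by abel
    rw [h3]
    calc ‖((φ₁ x - x) - (φ₁ y - y)) + (x - y)‖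
        ≤ ‖(φ₁ x - x) - (φ₁ y - y)‖ + ‖x - y‖ := norm_add_le _ _
      _ ≤ K₁ * ‖x - y‖ + ‖x - y‖ := by linarith
      _ = (1 + K₁) * ‖x - y‖ := by ring
  have hψ2lip : ∀ x y : E, dist (ψ₂ x) (ψ₂ y) ≤ (1 + K₂) * dist x y := by
    intro x y
    have := hl2' x y
    rw [dist_eq_norm, dist_eq_norm] at *
    have h3 : ψ₂ x - ψ₂ y = ((ψ₂ x - x) - (ψ₂ y - y)) + (x - y) := by abel
    rw [h3]
    calc ‖((ψ₂ x - x) - (ψ₂ y - y)) + (x - y)‖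
        ≤ ‖(ψ₂ x - x) - (ψ₂ y - y)‖ + ‖x - y‖ := norm_add_le _ _
      _ ≤ K₂ * ‖x - y‖ + ‖x - y‖ := by linarith
      _ = (1 + K₂) * ‖x - y‖ := by ring
  refine ⟨by positivity, hc2.comp hc1, hc1'.comp hc2', ?_, ?_, ?_, ?_, ?_, ?_⟩
  · intro x
    show ψ₁ (ψ₂ (φ₂ (φ₁ x))) = x
    rw [hli2 (φ₁ x), hli1 x]
  · intro y
    show φ₂ (φ₁ (ψ₁ (ψ₂ y))) = y
    rw [hri1 (ψ₂ y), hri2 y]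
  · intro x
    have hd : fderiv ℝ (φ₂ ∘ φ₁) x = (fderiv ℝ φ₂ (φ₁ x)).comp (fderiv ℝ φ₁ x) :=
      fderiv_comp x (hc2.differentiable one_ne_zero _) (hc1.differentiable one_ne_zero _)
    rw [hd]
    have : ((fderiv ℝ φ₂ (φ₁ x)).comp (fderiv ℝ φ₁ x)).det
        = (fderiv ℝ φ₂ (φ₁ x)).det * (fderiv ℝ φ₁ x).det := by
      rw [ContinuousLinearMap.det]
      exact LinearMap.det_comp _ _
    rw [this]
    exact mul_pos (hd2 _) (hd1 _)
  · intro x hx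
    show φ₂ (φ₁ x) = x
    rw [hs1 x hx, hs2 x hx]
  · intro x y
    have h3 : (φ₂ (φ₁ x) - x) - (φ₂ (φ₁ y) - y)
        = ((φ₂ (φ₁ x) - φ₁ x) - (φ₂ (φ₁ y) - φ₁ y)) + ((φ₁ x - x) - (φ₁ y - y)) := by abel
    show ‖(φ₂ (φ₁ x) - x) - (φ₂ (φ₁ y) - y)‖ ≤ _
    rw [h3]
    have hd0 : (0:ℝ) ≤ dist x y := dist_nonneg
    calc ‖((φ₂ (φ₁ x) - φ₁ x) - (φ₂ (φ₁ y) - φ₁ y)) + ((φ₁ x - x) - (φ₁ y - y))‖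
        ≤ ‖(φ₂ (φ₁ x) - φ₁ x) - (φ₂ (φ₁ y) - φ₁ y)‖ + ‖(φ₁ x - x) - (φ₁ y - y)‖ :=
          norm_add_le _ _
      _ ≤ K₂ * dist (φ₁ x) (φ₁ y) + K₁ * dist x y := by
          have := hl2 (φ₁ x) (φ₁ y); have := hl1 x y; linarith
      _ ≤ K₂ * ((1 + K₁) * dist x y) + K₁ * dist x y := by
          have := hφ1lip x y; nlinarith
      _ = (K₁ + K₂ + K₂ * K₁) * dist x y := by ring
  · intro x y
    have h3 : (ψ₁ (ψ₂ x) - x) - (ψ₁ (ψ₂ y) - y)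
        = ((ψ₁ (ψ₂ x) - ψ₂ x) - (ψ₁ (ψ₂ y) - ψ₂ y)) + ((ψ₂ x - x) - (ψ₂ y - y)) := by abel
    show ‖(ψ₁ (ψ₂ x) - x) - (ψ₁ (ψ₂ y) - y)‖ ≤ _
    rw [h3]
    have hd0 : (0:ℝ) ≤ dist x y := dist_nonneg
    calc ‖((ψ₁ (ψ₂ x) - ψ₂ x) - (ψ₁ (ψ₂ y) - ψ₂ y)) + ((ψ₂ x - x) - (ψ₂ y - y))‖
        ≤ ‖(ψ₁ (ψ₂ x) - ψ₂ x) - (ψ₁ (ψ₂ y) - ψ₂ y)‖ + ‖(ψ₂ x - x) - (ψ₂ y - y)‖ :=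
          norm_add_le _ _
      _ ≤ K₁ * dist (ψ₂ x) (ψ₂ y) + K₂ * dist x y := by
          have := hl1' (ψ₂ x) (ψ₂ y); have := hl2' x y; linarith
      _ ≤ K₁ * ((1 + K₂) * dist x y) + K₂ * dist x y := by
          have := hψ2lip x y; nlinarith
      _ ≤ (K₁ + K₂ + K₂ * K₁) * dist x y := by nlinarith

end Helpers

/-- The elongated neighbourhood `E(p,q;r)`: the set of points of `ℝ^d` whose distance to the
closed segment `[p,q]` is less than `r`. -/
def elongNbhd {d : ℕ} (p q : EuclideanSpace ℝ (Fin d)) (r : ℝ) :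
    Set (EuclideanSpace ℝ (Fin d)) :=
  {x | ∃ t ∈ Set.Icc (0 : ℝ) 1, dist x (t • p + (1 - t) • q) < r}

/-- **Perturbation moving a point**: for every `c > 0` there is `K > 0`, depending only on
`c` and `d`, such that for all `p, q ∈ ℝ^d` and `0 < r₁ < r₂` with
`|p - q| / (r₂ - r₁) ≤ c`, there is an orientation-preserving `C¹` diffeomorphism `φ` of
`ℝ^d` with `φ p = q`, support contained in `cl (E(p,q;r₂))`, and
`max ([φ - id]_Lip, [φ⁻¹ - id]_Lip) < K`. -/
theorem moving_perturbation (d : ℕ) (c : ℝ) (hc : 0 < c) :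
    ∃ K : ℝ, 0 < K ∧
      ∀ (p q : EuclideanSpace ℝ (Fin d)) (r₁ r₂ : ℝ), 0 < r₁ → r₁ < r₂ →
        dist p q ≤ c * (r₂ - r₁) →
        ∃ φ ψ : EuclideanSpace ℝ (Fin d) → EuclideanSpace ℝ (Fin d),
          ContDiff ℝ 1 φ ∧ ContDiff ℝ 1 ψ ∧
          Function.LeftInverse ψ φ ∧ Function.RightInverse ψ φ ∧
          (∀ x, 0 < (fderiv ℝ φ x).det) ∧
          φ p = q ∧
          closure {x | φ x ≠ x} ⊆ closure (elongNbhd p q r₂) ∧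
          (∀ x y, ‖(φ x - x) - (φ y - y)‖ ≤ K * dist x y) ∧
          (∀ x y, ‖(ψ x - x) - (ψ y - y)‖ ≤ K * dist x y) := by
  classical
  obtain ⟨M, hM1, hMlip⟩ := smoothTransition_lipschitz
  set N : ℕ := ⌈4 * M * c⌉₊ + 1 with hNdef
  have hMc : 0 < 4 * M * c := by nlinarith
  have hN : 4 * M * c < (N : ℝ) := by
    have h1 : (4 * M * c : ℝ) ≤ ⌈4 * M * c⌉₊ := Nat.le_ceil _
    have h2 : ((⌈4 * M * c⌉₊ : ℝ)) < N := by
      rw [hNdef]; push_cast; linarith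
    linarith
  have hNpos : (0:ℝ) < N := lt_trans hMc hN
  have hNne : (N : ℝ) ≠ 0 := ne_of_gt hNpos
  refine ⟨2^N, by positivity, ?_⟩
  intro p q r₁ r₂ hr₁ hr12 hpq
  set v := (N:ℝ)⁻¹ • (q - p) with hvdef
  set S := elongNbhd p q r₂ with hSdef
  set a := fun k : ℕ => p + ((k:ℝ)) • v with hadef
  have hden : (0:ℝ) < r₂^2 - r₁^2 := by nlinarith
  set χ := fun (k : ℕ) x => Real.smoothTransition ((r₂^2 - ‖x - a k‖^2)/(r₂^2 - r₁^2)) with hχdef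
  set g := fun (k : ℕ) x => χ k x • v with hgdef
  have hvnorm : ‖v‖ ≤ c * (r₂ - r₁) / N := by
    have h1 : ‖v‖ = ‖(N:ℝ)⁻¹‖ * ‖q - p‖ := norm_smul _ _
    have h2 : ‖q - p‖ = dist p q := by rw [dist_eq_norm, norm_sub_rev]
    rw [h1, h2, Real.norm_eq_abs, abs_of_nonneg (by positivity)]
    rw [div_eq_mul_inv, mul_comm]
    exact mul_le_mul_of_nonneg_right hpq (by positivity)
  -- Lipschitz bound for χ
  have hχconst : ∀ k x, χ k x
      = Real.smoothTransition ((r₂^2 - min (‖x - a k‖^2) (r₂^2))/(r₂^2 - r₁^2)) := by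
    intro k x
    simp only [hχdef]
    rcases le_total (‖x - a k‖^2) (r₂^2) with h | h
    · rw [min_eq_left h]
    · rw [min_eq_right h]
      have hle : (r₂^2 - ‖x - a k‖^2)/(r₂^2 - r₁^2) ≤ 0 :=
        div_nonpos_of_nonpos_of_nonneg (by linarith) (le_of_lt hden)
      rw [Real.smoothTransition.zero_of_nonpos hle]
      have : (r₂^2 - r₂^2)/(r₂^2 - r₁^2) = 0 := by rw [sub_self, zero_div]
      rw [this, Real.smoothTransition.zero]
  have hχlip : ∀ k x y, |χ k x - χ k y| ≤ M / (r₂^2 - r₁^2) * (2 * r₂) * ‖x - y‖ := by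
    intro k x y
    rw [hχconst k x, hχconst k y]
    set sx := ‖x - a k‖ with hsx
    set sy := ‖y - a k‖ with hsy
    have hst : |sx - sy| ≤ ‖x - y‖ := by
      have h0 : (x - a k) - (y - a k) = x - y := by abel
      have := abs_norm_sub_norm_le (x - a k) (y - a k)
      rwa [h0] at this
    have h3 := hMlip ((r₂^2 - min (sx^2) (r₂^2))/(r₂^2 - r₁^2))
      ((r₂^2 - min (sy^2) (r₂^2))/(r₂^2 - r₁^2))
    have h4 : (r₂^2 - min (sx^2) (r₂^2))/(r₂^2 - r₁^2) - (r₂^2 - min (sy^2) (r₂^2))/(r₂^2 - r₁^2)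
        = (min (sy^2) (r₂^2) - min (sx^2) (r₂^2))/(r₂^2 - r₁^2) := by
      field_simp
      ring
    rw [h4] at h3
    have h5 : |((min (sy^2) (r₂^2) - min (sx^2) (r₂^2))/(r₂^2 - r₁^2))|
        = |min (sy^2) (r₂^2) - min (sx^2) (r₂^2)| / (r₂^2 - r₁^2) := by
      rw [abs_div, abs_of_pos hden]
    rw [h5] at h3
    have h6 : |min (sy^2) (r₂^2) - min (sx^2) (r₂^2)| ≤ 2 * r₂ * |sy - sx| :=
      min_sq_clamp (norm_nonneg _) (norm_nonneg _) (by linarith)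
    have h8 : |min (sy^2) (r₂^2) - min (sx^2) (r₂^2)| ≤ 2 * r₂ * ‖x - y‖ := by
      refine le_trans h6 ?_
      rw [abs_sub_comm]
      have hr2 : (0:ℝ) ≤ 2 * r₂ := by linarith
      exact mul_le_mul_of_nonneg_left hst hr2
    have e1 : M / (r₂^2 - r₁^2) * (2 * r₂) * ‖x - y‖
        = M * ((2 * r₂ * ‖x - y‖) / (r₂^2 - r₁^2)) := by ring
    refine le_trans h3 ?_
    rw [e1]
    apply mul_le_mul_of_nonneg_left _ (by linarith : (0:ℝ) ≤ M)
    exact (div_le_div_iff_of_pos_right hden).mpr h8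
  have hglip : ∀ (k : ℕ) (x y : EuclideanSpace ℝ (Fin d)), ‖g k x - g k y‖ ≤ 2⁻¹ * ‖x - y‖ := by
    intro k x y
    have h1 : g k x - g k y = (χ k x - χ k y) • v := by
      simp only [hgdef]; rw [sub_smul]
    rw [h1, norm_smul, Real.norm_eq_abs]
    have h2 := hχlip k x y
    have h3 : |χ k x - χ k y| * ‖v‖ ≤ (M / (r₂^2 - r₁^2) * (2 * r₂) * ‖x - y‖) * ‖v‖ :=
      mul_le_mul_of_nonneg_right h2 (norm_nonneg v)
    refine le_trans h3 ?_
    have hcoef : M / (r₂^2 - r₁^2) * (2 * r₂) * ‖v‖ ≤ 2⁻¹ := by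
      have hA : M / (r₂^2 - r₁^2) * (2 * r₂) * ‖v‖
          ≤ M / (r₂^2 - r₁^2) * (2 * r₂) * (c * (r₂ - r₁)/N) := by
        apply mul_le_mul_of_nonneg_left hvnorm
        have : (0:ℝ) < r₂ := lt_trans hr₁ hr12
        positivity
      refine le_trans hA ?_
      rw [div_mul_eq_mul_div, div_mul_div_comm, div_le_iff₀ (by positivity)]
      nlinarith [mul_pos (mul_pos (sub_pos.mpr hr12) (lt_trans hr₁ hr12)) (sub_pos.mpr hN),
        mul_pos (mul_pos hr₁ (sub_pos.mpr hr12)) hNpos]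
    have e2 : M / (r₂^2 - r₁^2) * (2 * r₂) * ‖x - y‖ * ‖v‖
        = (M / (r₂^2 - r₁^2) * (2 * r₂) * ‖v‖) * ‖x - y‖ := by ring
    rw [e2]
    exact mul_le_mul_of_nonneg_right hcoef (norm_nonneg _)
  have hχcd : ∀ k : ℕ, ContDiff ℝ 1 (χ k) := by
    intro k
    simp only [hχdef]
    have h1 : ContDiff ℝ 1 (fun x : EuclideanSpace ℝ (Fin d) => ‖x - a k‖^2) := by
      have h0 := contDiff_norm_sq (𝕜 := ℝ) (E := EuclideanSpace ℝ (Fin d)) (n := 1)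
      exact h0.comp (contDiff_id.sub contDiff_const)
    have h2 : ContDiff ℝ 1 (fun t : ℝ => (r₂^2 - t)/(r₂^2 - r₁^2)) :=
      (contDiff_const.sub contDiff_id).div_const _
    exact (Real.smoothTransition.contDiff).comp (h2.comp h1)
  have hgcd : ∀ k : ℕ, ContDiff ℝ 1 (g k) := by
    intro k
    simp only [hgdef]
    exact (hχcd k).smul contDiff_const
  have hsupp : ∀ k : ℕ, k ≤ N → ∀ x, x ∉ S → g k x = 0 := by
    intro k hk x hx
    have hxk : r₂ ≤ ‖x - a k‖ := by
      by_contra hlt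
      push_neg at hlt
      apply hx
      rw [hSdef]
      refine ⟨1 - (k:ℝ)/N, ⟨?_, ?_⟩, ?_⟩
      · have hk1 : (k:ℝ)/N ≤ 1 := by
          rw [div_le_one hNpos]
          exact_mod_cast Nat.cast_le.mpr hk
        linarith
      · have hk0 : (0:ℝ) ≤ (k:ℝ)/N := by positivity
        linarith
      · have hpt : (1 - (k:ℝ)/N) • p + (1 - (1 - (k:ℝ)/N)) • q = a k := by
          simp only [hadef, hvdef]
          module
        rw [hpt, dist_eq_norm]
        exact hlt
    have hχ0 : χ k x = 0 := by
      simp only [hχdef]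
      apply Real.smoothTransition.zero_of_nonpos
      apply div_nonpos_of_nonpos_of_nonneg _ (le_of_lt hden)
      nlinarith [norm_nonneg (x - a k)]
    simp only [hgdef, hχ0, zero_smul]
  have hstep : ∀ k : ℕ, k ≤ N → ∃ ψ, Good 1 S (fun x => x + g k x) ψ :=
    fun k hk => good_perturb (hgcd k) (hglip k) S (hsupp k hk)
  have hχone : ∀ k : ℕ, χ k (a k) = 1 := by
    intro k
    have h0 : ‖a k - a k‖ = 0 := by rw [sub_self, norm_zero]
    simp only [hχdef]
    rw [h0]
    apply Real.smoothTransition.one_of_one_le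
    rw [le_div_iff₀ hden]
    nlinarith [sq_nonneg r₁]
  have hmove : ∀ k : ℕ, a k + g k (a k) = a (k+1) := by
    intro k
    have h1 : g k (a k) = v := by
      simp only [hgdef, hχone k, one_smul]
    rw [h1]
    simp only [hadef]
    push_cast
    module
  have main : ∀ n : ℕ, n ≤ N → ∃ Φ Ψ, Good ((2:ℝ)^n - 1) S Φ Ψ ∧ Φ p = a n := by
    intro n
    induction n with
    | zero =>
      intro _
      refine ⟨id, id, ?_, ?_⟩
      · have h0 := good_id S
        have he : ((2:ℝ)^0 - 1) = 0 := by norm_num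
        rw [he]
        exact h0
      · show p = a 0
        simp only [hadef]
        rw [Nat.cast_zero, zero_smul, add_zero]
    | succ n ih =>
      intro hn1
      obtain ⟨Φ, Ψ, hG, hΦp⟩ := ih (Nat.le_of_succ_le hn1)
      obtain ⟨ψ, hψ⟩ := hstep n (Nat.le_of_succ_le hn1)
      refine ⟨(fun x => x + g n x) ∘ Φ, Ψ ∘ ψ, ?_, ?_⟩
      · have hcomp := good_comp hG hψ
        have heq : ((2:ℝ)^n - 1) + 1 + 1 * ((2:ℝ)^n - 1) = (2:ℝ)^(n+1) - 1 := by
          rw [pow_succ]; ring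
        rw [← heq]
        exact hcomp
      · show (fun x => x + g n x) (Φ p) = a (n+1)
        rw [hΦp]
        exact hmove n
  obtain ⟨Φ, Ψ, hG, hΦp⟩ := main N le_rfl
  have hΦq : Φ p = q := by
    rw [hΦp]
    simp only [hadef, hvdef]
    rw [smul_smul, mul_inv_cancel₀ hNne, one_smul]
    abel
  obtain ⟨hK0, hcd1, hcd2, hli, hri, hdet, hsup, hlφ, hlψ⟩ := hG
  have hKle : ((2:ℝ)^N - 1) ≤ 2^N := by linarith
  refine ⟨Φ, Ψ, hcd1, hcd2, hli, hri, hdet, hΦq, ?_, ?_, ?_⟩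
  · apply closure_mono
    intro x hx
    by_contra hxs
    exact hx (hsup x hxs)
  · intro x y
    refine le_trans (hlφ x y) ?_
    exact mul_le_mul_of_nonneg_right hKle dist_nonneg
  · intro x y
    refine le_trans (hlψ x y) ?_
    exact mul_le_mul_of_nonneg_right hKle dist_nonneg
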